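/- arXiv:1807.11887 — 4 statements merged into one kernel-verified Lean document; each statement's English description precedes it below -/
import Mathlib

section
/- Let V : ℝ^d → ℝ be continuous, bounded, and nonnegative, and let f : ℝ^d → ℝ be continuous and compactly supported. For ε > 0 define K^ε_V(x,y) := ∫_{ℝ^d} exp(−‖x−z‖²/(2ε)) e^{−V(z)} exp(−‖z−y‖²/(2ε)) dz and T_{K^ε_V} f(x) := ∫_{ℝ^d} K^ε_V(x,y) f(y) dy. Then for every x ∈ ℝ^d, lim_{ε → 0⁺} (2πε)^{−d} T_{K^ε_V} f(x) = e^{−V(x)} f(x). -/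
open MeasureTheory Real Filter

section sandwichHelpers

variable {d : ℕ}

local notation "E" => EuclideanSpace ℝ (Fin d)

lemma gauss_integrable {b : ℝ} (hb : 0 < b) :
    Integrable (fun v : E => rexp (-b * ‖v‖ ^ 2)) := by
  have h := (GaussianFourier.integrable_cexp_neg_mul_sq_norm_add (V := E)
      (b := (b : ℂ)) (by simpa using hb) 0 0).norm
  have e : ∀ v : E, ((‖v‖:ℂ) ^ 2).re = ‖v‖ ^ 2 := fun v => by
    norm_cast
  simpa [Complex.norm_exp, e] using h

lemma gauss_value : ∫ v : E, rexp (-‖v‖ ^ 2 / 2) = (2 * π) ^ ((d : ℝ) / 2) := by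
  have h := GaussianFourier.integral_rexp_neg_mul_sq_norm (V := E) (b := 1/2) (by norm_num)
  rw [finrank_euclideanSpace_fin] at h
  have : ∀ v : E, -‖v‖ ^ 2 / 2 = -(1/2) * ‖v‖ ^ 2 := fun v => by ring
  simp_rw [this, h]
  have : π / (1/2) = 2 * π := by ring
  rw [this]

lemma integral_eq_scale (x : E) {s : ℝ} (hs : 0 < s) (g : E → ℝ) :
    ∫ z, g z = s ^ d * ∫ u, g (x + s • u) := by
  have h := Measure.integral_comp_smul (μ := (volume : Measure E)) (fun v => g (x + v)) s
  simp only [finrank_euclideanSpace_fin] at h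
  rw [h, integral_add_left_eq_self (fun v => g v) x] at *
  rw [abs_of_pos (by positivity), smul_eq_mul]
  field_simp


lemma exp_prod_bound (w u : E) :
    rexp (-‖u‖ ^ 2 / 2) * rexp (-‖u - w‖ ^ 2 / 2) ≤
      rexp (-(1/8) * ‖w‖ ^ 2) * rexp (-(1/4) * ‖u‖ ^ 2) := by
  rw [← Real.exp_add, ← Real.exp_add]
  apply Real.exp_le_exp.2
  have h1 : ‖w‖ ≤ ‖u‖ + ‖u - w‖ := by
    calc ‖w‖ = ‖u - (u - w)‖ := by congr 1; abel
    _ ≤ ‖u‖ + ‖u - w‖ := norm_sub_le _ _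
  have h2 : ‖w‖ ^ 2 ≤ (‖u‖ + ‖u - w‖) ^ 2 :=
    pow_le_pow_left₀ (norm_nonneg _) h1 2
  nlinarith [sq_nonneg (‖u‖ - ‖u - w‖), norm_nonneg u, norm_nonneg (u - w)]




end sandwichHelpers

/-- The reweighted ("sandwich") kernel
`K^ε_V(x,y) = ∫ exp(−‖x−z‖²/(2ε)) e^{−V(z)} exp(−‖z−y‖²/(2ε)) dz`. -/
noncomputable def sandwichKernel {d : ℕ} (V : EuclideanSpace ℝ (Fin d) → ℝ) (ε : ℝ)
    (x y : EuclideanSpace ℝ (Fin d)) : ℝ :=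
  ∫ z : EuclideanSpace ℝ (Fin d),
    Real.exp (-‖x - z‖ ^ 2 / (2 * ε)) * Real.exp (-(V z)) * Real.exp (-‖z - y‖ ^ 2 / (2 * ε))

section sandwichMain

/-- **Leading-order limit of the reweighted kernel operator.** For `V` continuous, bounded and
nonnegative, and `f` continuous with compact support, for every `x`,
`(2πε)^{−d} ∫ K^ε_V(x,y) f(y) dy → e^{−V(x)} f(x)` as `ε → 0⁺`. -/
theorem sandwichKernel_operator_limit {d : ℕ} (V f : EuclideanSpace ℝ (Fin d) → ℝ)
    (hV : Continuous V) (hVbdd : ∃ M : ℝ, ∀ z, V z ≤ M) (hVnn : ∀ z, 0 ≤ V z)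
    (hf : Continuous f) (hfsupp : HasCompactSupport f) (x : EuclideanSpace ℝ (Fin d)) :
    Tendsto (fun ε : ℝ =>
        (2 * Real.pi * ε) ^ (-(d : ℝ)) *
          ∫ y : EuclideanSpace ℝ (Fin d), sandwichKernel V ε x y * f y)
      (nhdsWithin 0 (Set.Ioi 0)) (nhds (Real.exp (-(V x)) * f x)) := by
  obtain ⟨C, hC⟩ := hfsupp.exists_bound_of_continuous hf
  have hC0 : 0 ≤ C := le_trans (norm_nonneg _) (hC x)
  set μ2 : Measure ((EuclideanSpace ℝ (Fin d)) × (EuclideanSpace ℝ (Fin d))) := (volume : Measure (EuclideanSpace ℝ (Fin d))).prod (volume : Measure (EuclideanSpace ℝ (Fin d))) with hμ2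
  set F : ℝ → (EuclideanSpace ℝ (Fin d)) × (EuclideanSpace ℝ (Fin d)) → ℝ := fun ε p =>
    rexp (-‖p.2‖ ^ 2 / 2) * rexp (-(V (x + Real.sqrt ε • p.2))) *
      rexp (-‖p.2 - p.1‖ ^ 2 / 2) * f (x + Real.sqrt ε • p.1) with hF
  set bound : (EuclideanSpace ℝ (Fin d)) × (EuclideanSpace ℝ (Fin d)) → ℝ := fun p =>
    C * (rexp (-(1/8) * ‖p.1‖ ^ 2) * rexp (-(1/4) * ‖p.2‖ ^ 2)) with hbd
  have hFcont : ∀ ε, Continuous (F ε) := by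
    intro ε
    apply Continuous.mul
    apply Continuous.mul
    apply Continuous.mul
    · exact Real.continuous_exp.comp (by fun_prop)
    · exact Real.continuous_exp.comp ((hV.comp (by fun_prop)).neg)
    · exact Real.continuous_exp.comp (by fun_prop)
    · exact hf.comp (by fun_prop)
  have hFbound : ∀ ε, ∀ p, ‖F ε p‖ ≤ bound p := by
    intro ε p
    have e2 : rexp (-(V (x + Real.sqrt ε • p.2))) ≤ 1 :=
      Real.exp_le_one_iff.2 (neg_nonpos.2 (hVnn _))
    have hfb : |f (x + Real.sqrt ε • p.1)| ≤ C := by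
      simpa [Real.norm_eq_abs] using hC (x + Real.sqrt ε • p.1)
    calc ‖F ε p‖ = rexp (-‖p.2‖ ^ 2 / 2) * rexp (-(V (x + Real.sqrt ε • p.2))) *
          rexp (-‖p.2 - p.1‖ ^ 2 / 2) * |f (x + Real.sqrt ε • p.1)| := by
          simp [hF, Real.norm_eq_abs, abs_mul, Real.abs_exp]
      _ ≤ rexp (-‖p.2‖ ^ 2 / 2) * 1 * rexp (-‖p.2 - p.1‖ ^ 2 / 2) * C := by
          gcongr <;> positivity
      _ = (rexp (-‖p.2‖ ^ 2 / 2) * rexp (-‖p.2 - p.1‖ ^ 2 / 2)) * C := by ring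
      _ ≤ (rexp (-(1/8) * ‖p.1‖ ^ 2) * rexp (-(1/4) * ‖p.2‖ ^ 2)) * C :=
          mul_le_mul_of_nonneg_right (exp_prod_bound p.1 p.2) hC0
      _ = bound p := by rw [hbd]; ring
  have hbound_int : Integrable bound μ2 :=
    ((gauss_integrable (by norm_num : (0:ℝ) < 1/8)).mul_prod
      (gauss_integrable (by norm_num : (0:ℝ) < 1/4))).const_mul C
  have hFint : ∀ ε, Integrable (F ε) μ2 := fun ε =>
    hbound_int.mono' (hFcont ε).aestronglyMeasurable (ae_of_all _ (hFbound ε))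
  set F0 : (EuclideanSpace ℝ (Fin d)) × (EuclideanSpace ℝ (Fin d)) → ℝ := fun p =>
    rexp (-‖p.2‖ ^ 2 / 2) * rexp (-(V x)) * rexp (-‖p.2 - p.1‖ ^ 2 / 2) * f x with hF0
  have hpt : ∀ p : (EuclideanSpace ℝ (Fin d)) × (EuclideanSpace ℝ (Fin d)), Tendsto (fun ε => F ε p) (nhdsWithin 0 (Set.Ioi 0)) (nhds (F0 p)) := by
    intro p
    have hc : Continuous (fun ε : ℝ => F ε p) := by
      apply Continuous.mul
      apply Continuous.mul
      apply Continuous.mul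
      · fun_prop
      · exact Real.continuous_exp.comp ((hV.comp (by fun_prop)).neg)
      · fun_prop
      · exact hf.comp (by fun_prop)
    have h0 : Tendsto (fun ε : ℝ => F ε p) (nhdsWithin (0:ℝ) (Set.Ioi 0)) (nhds (F 0 p)) :=
      (hc.tendsto 0).mono_left nhdsWithin_le_nhds
    simpa [hF, hF0, Real.sqrt_zero] using h0
  have hlim : Tendsto (fun ε => ∫ p, F ε p ∂μ2) (nhdsWithin (0:ℝ) (Set.Ioi 0))
      (nhds (∫ p, F0 p ∂μ2)) :=
    tendsto_integral_filter_of_dominated_convergence bound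
      (Eventually.of_forall fun ε => (hFcont ε).aestronglyMeasurable)
      (Eventually.of_forall fun ε => ae_of_all _ (hFbound ε))
      hbound_int (ae_of_all _ hpt)
  -- value of the limit integral
  have hGcont : Continuous (fun p : (EuclideanSpace ℝ (Fin d)) × (EuclideanSpace ℝ (Fin d)) => rexp (-‖p.2‖ ^ 2 / 2) * rexp (-‖p.2 - p.1‖ ^ 2 / 2)) := by
    fun_prop
  have hG : Integrable (fun p : (EuclideanSpace ℝ (Fin d)) × (EuclideanSpace ℝ (Fin d)) => rexp (-‖p.2‖ ^ 2 / 2) * rexp (-‖p.2 - p.1‖ ^ 2 / 2)) μ2 := by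
    apply (((gauss_integrable (by norm_num : (0:ℝ) < 1/8)).mul_prod
      (gauss_integrable (by norm_num : (0:ℝ) < 1/4)))).mono' hGcont.aestronglyMeasurable
    refine ae_of_all _ fun p => ?_
    have := exp_prod_bound p.1 p.2
    have hpos : (0:ℝ) < rexp (-‖p.2‖ ^ 2 / 2) * rexp (-‖p.2 - p.1‖ ^ 2 / 2) := by positivity
    rw [Real.norm_eq_abs, abs_of_pos hpos]
    exact this
  have hJ : ∫ p, (rexp (-‖p.2‖ ^ 2 / 2) * rexp (-‖p.2 - p.1‖ ^ 2 / 2)) ∂μ2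
      = (2 * π) ^ ((d : ℝ) / 2) * (2 * π) ^ ((d : ℝ) / 2) := by
    rw [hμ2, integral_prod_symm _ hG]
    have inner : ∀ u : (EuclideanSpace ℝ (Fin d)), (∫ w : (EuclideanSpace ℝ (Fin d)), rexp (-‖u‖ ^ 2 / 2) * rexp (-‖u - w‖ ^ 2 / 2))
        = rexp (-‖u‖ ^ 2 / 2) * (2 * π) ^ ((d : ℝ) / 2) := by
      intro u
      rw [integral_const_mul]
      congr 1
      have hrev : ∀ w : (EuclideanSpace ℝ (Fin d)), ‖u - w‖ = ‖w - u‖ := fun w => norm_sub_rev _ _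
      simp_rw [hrev]
      rw [integral_sub_right_eq_self (fun v : (EuclideanSpace ℝ (Fin d)) => rexp (-‖v‖ ^ 2 / 2)) u]
      exact gauss_value
    simp_rw [inner]
    rw [integral_mul_const, gauss_value]
  have hF0val : ∫ p, F0 p ∂μ2
      = (rexp (-(V x)) * f x) * ((2 * π) ^ ((d : ℝ) / 2) * (2 * π) ^ ((d : ℝ) / 2)) := by
    have hre : F0 = fun p => (rexp (-(V x)) * f x) *
        (rexp (-‖p.2‖ ^ 2 / 2) * rexp (-‖p.2 - p.1‖ ^ 2 / 2)) := by
      funext p; rw [hF0]; ring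
    rw [hre, integral_const_mul, hJ]
  have hpow : (2 * π) ^ ((d : ℝ) / 2) * (2 * π) ^ ((d : ℝ) / 2) = (2 * π) ^ d := by
    rw [← Real.rpow_add (by positivity), ← Real.rpow_natCast (2 * π) d]
    norm_num
  -- key identity on Ioi 0
  have hkey : (fun ε : ℝ => (2 * Real.pi * ε) ^ (-(d : ℝ)) *
        ∫ y : (EuclideanSpace ℝ (Fin d)), sandwichKernel V ε x y * f y) =ᶠ[nhdsWithin (0:ℝ) (Set.Ioi 0)]
      (fun ε : ℝ => ((2 * π) ^ d)⁻¹ * ∫ p, F ε p ∂μ2) := by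
    filter_upwards [self_mem_nhdsWithin] with ε hε
    have hε : (0:ℝ) < ε := hε
    set s : ℝ := Real.sqrt ε with hsdef
    have hs : 0 < s := Real.sqrt_pos.2 hε
    have hs2 : s ^ 2 = ε := Real.sq_sqrt hε.le
    have hker : ∀ y : (EuclideanSpace ℝ (Fin d)), sandwichKernel V ε x y
        = s ^ d * ∫ u : (EuclideanSpace ℝ (Fin d)), rexp (-‖u‖ ^ 2 / 2) * rexp (-(V (x + s • u))) *
            rexp (-‖x + s • u - y‖ ^ 2 / (2 * ε)) := by
      intro y
      rw [sandwichKernel, integral_eq_scale x hs]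
      congr 1
      refine integral_congr_ae (ae_of_all _ fun u => ?_)
      simp only []
      have h1 : ‖x - (x + s • u)‖ ^ 2 = ε * ‖u‖ ^ 2 := by
        rw [sub_add_cancel_left, norm_neg, norm_smul, Real.norm_eq_abs, abs_of_pos hs,
          mul_pow, hs2]
      rw [h1]
      have h2 : -(ε * ‖u‖ ^ 2) / (2 * ε) = -‖u‖ ^ 2 / 2 := by
        field_simp
      rw [h2]
    have perw : ∀ w : (EuclideanSpace ℝ (Fin d)), sandwichKernel V ε x (x + s • w) * f (x + s • w)
        = s ^ d * ∫ u, F ε (w, u) := by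
      intro w
      rw [hker (x + s • w), mul_assoc, ← integral_mul_const]
      congr 1
      refine integral_congr_ae (ae_of_all _ fun u => ?_)
      simp only [hF]
      rw [← hsdef]
      have h3 : ‖x + s • u - (x + s • w)‖ ^ 2 = ε * ‖u - w‖ ^ 2 := by
        have : x + s • u - (x + s • w) = s • (u - w) := by
          rw [smul_sub]; abel
        rw [this, norm_smul, Real.norm_eq_abs, abs_of_pos hs, mul_pow, hs2]
      rw [h3]
      have h4 : -(ε * ‖u - w‖ ^ 2) / (2 * ε) = -‖u - w‖ ^ 2 / 2 := by
        field_simp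
      rw [h4]
    have hfub : (∫ w : (EuclideanSpace ℝ (Fin d)), ∫ u : (EuclideanSpace ℝ (Fin d)), F ε (w, u)) = ∫ p, F ε p ∂μ2 := by
      exact integral_integral (f := fun w u => F ε (w, u)) (hFint ε)
    have hmain : (∫ y : (EuclideanSpace ℝ (Fin d)), sandwichKernel V ε x y * f y)
        = s ^ d * s ^ d * ∫ p, F ε p ∂μ2 := by
      rw [integral_eq_scale x hs (fun y => sandwichKernel V ε x y * f y)]
      calc s ^ d * ∫ w : (EuclideanSpace ℝ (Fin d)), sandwichKernel V ε x (x + s • w) * f (x + s • w)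
          = s ^ d * ∫ w : (EuclideanSpace ℝ (Fin d)), s ^ d * ∫ u, F ε (w, u) := by
            congr 1
            exact integral_congr_ae (ae_of_all _ perw)
        _ = s ^ d * (s ^ d * ∫ w : (EuclideanSpace ℝ (Fin d)), ∫ u, F ε (w, u)) := by rw [integral_const_mul]
        _ = s ^ d * s ^ d * ∫ p, F ε p ∂μ2 := by rw [hfub]; ring
    rw [hmain]
    have hsd : s ^ d * s ^ d = ε ^ d := by
      rw [← mul_pow, ← sq, hs2]
    have hrpow : (2 * π * ε) ^ (-(d : ℝ)) = ((2 * π) ^ d * ε ^ d)⁻¹ := by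
      rw [Real.rpow_neg (by positivity), Real.rpow_natCast, mul_pow]
    rw [hrpow, hsd]
    have h2π : ((2 : ℝ) * π) ^ d ≠ 0 := by positivity
    have hεd : (ε : ℝ) ^ d ≠ 0 := by positivity
    field_simp
  have hfinal : Tendsto (fun ε => ((2 * π) ^ d)⁻¹ * ∫ p, F ε p ∂μ2)
      (nhdsWithin (0:ℝ) (Set.Ioi 0)) (nhds (Real.exp (-(V x)) * f x)) := by
    have := hlim.const_mul (((2 * π) ^ d)⁻¹ : ℝ)
    rw [hF0val, hpow] at this
    convert this using 2
    have h2π : ((2 : ℝ) * π) ^ d ≠ 0 := by positivity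
    field_simp
  exact Tendsto.congr' hkey.symm hfinal

end sandwichMain
end

section
/- Let K be an n × n real symmetric positive definite matrix. For a subset S of the index set {1,…,n}, let K[S] denote the principal submatrix of K with rows and columns indexed by S (with det K[∅] = 1). Then the set function S ↦ log det K[S] is submodular: for all subsets S ⊆ T of {1,…,n} and every index i ∉ T, log det K[T ∪ {i}] − log det K[T] ≤ log det K[S ∪ {i}] − log det K[S]. -/
open Matrix

/-- The principal submatrix of `K` with rows and columns indexed by the finite set `S`. -/
def principalSubmatrix {n : Type*} (K : Matrix n n ℝ) (S : Finset n) :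
    Matrix {a // a ∈ S} {a // a ∈ S} ℝ :=
  K.submatrix (fun a => a.1) (fun a => a.1)

private lemma sum_restrict {n : ℕ} (S : Finset (Fin n)) (f : {a // a ∈ S} → ℝ)
    (g : Fin n → ℝ) (hg : ∀ j, g j = if h : j ∈ S then f ⟨j, h⟩ else 0) :
    ∑ j : Fin n, g j = ∑ b : {a // a ∈ S}, f b := by
  calc ∑ j : Fin n, g j = ∑ j ∈ S, g j :=
        (Finset.sum_subset (Finset.subset_univ S) (fun j _ hj => by rw [hg, dif_neg hj])).symm
    _ = ∑ b : {a // a ∈ S}, g b.1 := Finset.sum_subtype S (fun _ => Iff.rfl) g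
    _ = ∑ b : {a // a ∈ S}, f b := by
        refine Finset.sum_congr rfl fun b _ => ?_
        rw [hg, dif_pos b.2]

private lemma principal_posDef {n : ℕ} {K : Matrix (Fin n) (Fin n) ℝ} (hK : K.PosDef)
    (S : Finset (Fin n)) : (principalSubmatrix K S).PosDef := by
  refine posDef_iff_dotProduct_mulVec.mpr ⟨hK.1.submatrix _, fun x hx => ?_⟩
  set y : Fin n → ℝ := fun j => if h : j ∈ S then x ⟨j, h⟩ else 0 with hy
  have hy0 : y ≠ 0 := by
    obtain ⟨a, ha⟩ := Function.ne_iff.mp hx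
    intro h
    apply ha
    have h2 : y a.1 = 0 := congrFun h a.1
    simp only [hy, dif_pos a.2, Subtype.coe_eta] at h2
    simpa using h2
  have := (posDef_iff_dotProduct_mulVec.mp hK).2 hy0
  simp only [star_trivial] at this ⊢
  have hcalc : y ⬝ᵥ K *ᵥ y = x ⬝ᵥ (principalSubmatrix K S) *ᵥ x := by
    rw [dotProduct, dotProduct]
    rw [sum_restrict S (fun b => x b * ((principalSubmatrix K S) *ᵥ x) b)
      (fun j => y j * (K *ᵥ y) j) ?_]
    intro j
    by_cases hj : j ∈ S
    · rw [dif_pos hj, hy]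
      simp only [dif_pos hj]
      congr 1
      rw [mulVec, mulVec, dotProduct, dotProduct]
      rw [sum_restrict S (fun b => principalSubmatrix K S ⟨j, hj⟩ b * x b)
        (fun k => K j k * (if h : k ∈ S then x ⟨k, h⟩ else 0)) ?_]
      intro k
      by_cases hk : k ∈ S
      · simp [hk, principalSubmatrix]
      · simp [hk]
    · rw [hy]; simp [hj]
  rwa [hcalc] at this

/-- Key factorization: `det K[insert i U] = det K[U] * Q(e_i - x)` where `x` is supported
on `U` and `K *ᵥ (e_i - x)` vanishes on `U`. -/
private lemma key_lemma {n : ℕ} {K : Matrix (Fin n) (Fin n) ℝ} (hK : K.PosDef)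
    (U : Finset (Fin n)) {i : Fin n} (hi : i ∉ U) :
    ∃ x : Fin n → ℝ, (∀ j, j ∉ U → x j = 0) ∧
      (∀ j, j ∈ U → (K *ᵥ (Pi.single i 1 - x)) j = 0) ∧
      (principalSubmatrix K (insert i U)).det =
        (principalSubmatrix K U).det *
          ((Pi.single i 1 - x) ⬝ᵥ K *ᵥ (Pi.single i 1 - x)) := by
  classical
  set A := principalSubmatrix K U with hA
  have hApd : A.PosDef := principal_posDef hK U
  have hAdet : IsUnit A.det := hApd.det_pos.ne'.isUnit
  have : Invertible A := A.invertibleOfIsUnitDet hAdet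
  set b : {a // a ∈ U} → ℝ := fun s => K s.1 i with hb
  set v : {a // a ∈ U} → ℝ := A⁻¹ *ᵥ b with hv
  set x : Fin n → ℝ := fun j => if h : j ∈ U then v ⟨j, h⟩ else 0 with hx
  have hsupp : ∀ j, j ∉ U → x j = 0 := fun j hj => by rw [hx]; exact dif_neg hj
  -- (K *ᵥ x) j = ∑ s, K j s.1 * v s
  have hKx : ∀ j : Fin n, (K *ᵥ x) j = ∑ s : {a // a ∈ U}, K j s.1 * v s := by
    intro j
    rw [mulVec, dotProduct]
    refine sum_restrict U (fun s => K j s.1 * v s) _ fun k => ?_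
    by_cases hk : k ∈ U
    · simp [hx, hk]
    · simp [hx, hk]
  -- A *ᵥ v = b
  have hAv : A *ᵥ v = b := by
    rw [hv, mulVec_mulVec, Matrix.mul_nonsing_inv _ hAdet, one_mulVec]
  -- mulVec of single
  have hsingle : ∀ j : Fin n, (K *ᵥ Pi.single i 1) j = K j i := by
    intro j
    simp [mulVec, dotProduct, Pi.single_apply, mul_ite, Finset.sum_ite_eq']
  have hKw : ∀ j, j ∈ U → (K *ᵥ (Pi.single i 1 - x)) j = 0 := by
    intro j hj
    rw [mulVec_sub, Pi.sub_apply, hsingle, hKx]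
    have : ∑ s : {a // a ∈ U}, K j s.1 * v s = (A *ᵥ v) ⟨j, hj⟩ := by
      rw [mulVec, dotProduct]; rfl
    rw [this, hAv, hb, sub_self]
  refine ⟨x, hsupp, hKw, ?_⟩
  -- the reindexing equivalence
  have hiU : ∀ a : {a // a ∈ insert i U}, a.1 ∉ U → a.1 = i := fun a ha =>
    (Finset.mem_insert.mp a.2).resolve_right ha
  set e : {a // a ∈ insert i U} ≃ ({a // a ∈ U} ⊕ Unit) :=
    { toFun := fun a => if h : a.1 ∈ U then Sum.inl ⟨a.1, h⟩ else Sum.inr ()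
      invFun := Sum.elim (fun s => ⟨s.1, Finset.mem_insert_of_mem s.2⟩)
        (fun _ => ⟨i, Finset.mem_insert_self i U⟩)
      left_inv := fun a => by
        by_cases h : a.1 ∈ U
        · simp only [dif_pos h]; rfl
        · simp only [dif_neg h, Sum.elim_inr]
          exact Subtype.ext (hiU a h).symm
      right_inv := fun s => by
        cases s with
        | inl s => simp only [Sum.elim_inl, dif_pos s.2]; exact dif_pos s.2
        | inr u => simp only [Sum.elim_inr, dif_neg hi]; exact dif_neg hi } with he
  set B : Matrix {a // a ∈ U} Unit ℝ := fun s _ => K s.1 i with hB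
  set C : Matrix Unit {a // a ∈ U} ℝ := fun _ s => K i s.1 with hC
  set D : Matrix Unit Unit ℝ := fun _ _ => K i i with hD
  have hein : ∀ (a : {a // a ∈ insert i U}) (h : a.1 ∈ U), e a = Sum.inl ⟨a.1, h⟩ := by
    intro a h; simp [he, h]
  have heout : ∀ (a : {a // a ∈ insert i U}), a.1 ∉ U → e a = Sum.inr () := by
    intro a h; simp [he, h]
  have hblock : principalSubmatrix K (insert i U) = (fromBlocks A B C D).submatrix e e := by
    ext a c
    by_cases ha : a.1 ∈ U <;> by_cases hc : c.1 ∈ U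
    · simp only [principalSubmatrix, submatrix_apply, hein a ha, hein c hc,
        fromBlocks_apply₁₁, hA]
    · simp only [principalSubmatrix, submatrix_apply, hein a ha, heout c hc,
        fromBlocks_apply₁₂, hB]
      exact congrArg _ (hiU c hc)
    · simp only [principalSubmatrix, submatrix_apply, heout a ha, hein c hc,
        fromBlocks_apply₂₁, hC]
      exact congrFun (congrArg _ (hiU a ha)) _
    · simp only [principalSubmatrix, submatrix_apply, heout a ha, heout c hc,
        fromBlocks_apply₂₂, hD]
      rw [hiU a ha, hiU c hc]
      rfl
  rw [hblock, det_submatrix_equiv_self, det_fromBlocks₁₁, invOf_eq_nonsing_inv]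
  congr 1
  rw [det_unique]
  -- compute the 1×1 Schur complement entry
  have hschur : (D - C * A⁻¹ * B) default default =
      K i i - ∑ s : {a // a ∈ U}, K i s.1 * v s := by
    have h2 : (C * A⁻¹ * B) default default = ∑ s : {a // a ∈ U}, K i s.1 * v s := by
      rw [Matrix.mul_assoc, Matrix.mul_apply]
      exact Finset.sum_congr rfl fun s _ => rfl
    rw [Matrix.sub_apply, h2]
  rw [hschur]
  -- now show Q(e_i - x) equals this
  have hxKw : x ⬝ᵥ (K *ᵥ (Pi.single i 1 - x)) = 0 := by
    rw [dotProduct]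
    refine Finset.sum_eq_zero fun j _ => ?_
    by_cases hj : j ∈ U
    · rw [hKw j hj, mul_zero]
    · rw [hsupp j hj, zero_mul]
  have hsingledot : ∀ u : Fin n → ℝ, Pi.single i 1 ⬝ᵥ u = u i := by
    intro u
    simp [dotProduct, Pi.single_apply, ite_mul, Finset.sum_ite_eq]
  rw [sub_dotProduct, hxKw, sub_zero, hsingledot, mulVec_sub, Pi.sub_apply, hsingle, hKx]


/-- **Submodularity of log-determinant.** Let `K` be an `n × n` real symmetric positive
definite matrix. For subsets `S ⊆ T` of the index set and an index `i ∉ T`,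
`log det K[T ∪ {i}] − log det K[T] ≤ log det K[S ∪ {i}] − log det K[S]`. -/
theorem logdet_submodular {n : ℕ} (K : Matrix (Fin n) (Fin n) ℝ) (hK : K.PosDef)
    (S T : Finset (Fin n)) (hST : S ⊆ T) (i : Fin n) (hi : i ∉ T) :
    Real.log (principalSubmatrix K (insert i T)).det -
        Real.log (principalSubmatrix K T).det
      ≤ Real.log (principalSubmatrix K (insert i S)).det -
          Real.log (principalSubmatrix K S).det := by
  have hiS : i ∉ S := fun h => hi (hST h)
  obtain ⟨xS, hS0, hSK, hdS⟩ := key_lemma hK S hiS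
  obtain ⟨xT, hT0, hTK, hdT⟩ := key_lemma hK T hi
  set wS : Fin n → ℝ := Pi.single i 1 - xS with hwS
  set wT : Fin n → ℝ := Pi.single i 1 - xT with hwT
  have hsym : ∀ a b, K a b = K b a := by
    intro a b
    have h := congrFun (congrFun hK.1 a) b
    simpa [conjTranspose_apply] using h.symm
  have hcomm : ∀ u z : Fin n → ℝ, u ⬝ᵥ K *ᵥ z = z ⬝ᵥ K *ᵥ u := by
    intro u z
    simp only [dotProduct, mulVec, Finset.mul_sum]
    rw [Finset.sum_comm]
    refine Finset.sum_congr rfl fun j _ => Finset.sum_congr rfl fun k _ => ?_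
    rw [hsym k j]; ring
  -- positivity of the two Schur complements
  have hwT_ne : wT ≠ 0 := by
    intro h
    have h2 := congrFun h i
    simp [hwT, hT0 i hi] at h2
  have hwS_ne : wS ≠ 0 := by
    intro h
    have h2 := congrFun h i
    simp [hwS, hS0 i hiS] at h2
  have hQT : 0 < wT ⬝ᵥ K *ᵥ wT := by simpa using (posDef_iff_dotProduct_mulVec.mp hK).2 hwT_ne
  have hQS : 0 < wS ⬝ᵥ K *ᵥ wS := by simpa using (posDef_iff_dotProduct_mulVec.mp hK).2 hwS_ne
  -- monotonicity of the Schur complement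
  have hzsupp : ∀ j, j ∉ T → (xT - xS) j = 0 := fun j hj => by
    simp [hT0 j hj, hS0 j (fun h => hj (hST h))]
  have hz1 : (xT - xS) ⬝ᵥ K *ᵥ wT = 0 := by
    rw [dotProduct]
    refine Finset.sum_eq_zero fun j _ => ?_
    by_cases hj : j ∈ T
    · rw [hTK j hj, mul_zero]
    · rw [hzsupp j hj, zero_mul]
  have hz2 : wT ⬝ᵥ K *ᵥ (xT - xS) = 0 := by rw [hcomm]; exact hz1
  have hznn : 0 ≤ (xT - xS) ⬝ᵥ K *ᵥ (xT - xS) := by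
    simpa using (posSemidef_iff_dotProduct_mulVec.mp hK.posSemidef).2 (xT - xS)
  have hdecomp : wS = wT + (xT - xS) := by
    rw [hwS, hwT]; abel
  have key_ineq : wT ⬝ᵥ K *ᵥ wT ≤ wS ⬝ᵥ K *ᵥ wS := by
    calc wT ⬝ᵥ K *ᵥ wT ≤ wT ⬝ᵥ K *ᵥ wT + (xT - xS) ⬝ᵥ K *ᵥ (xT - xS) :=
          le_add_of_nonneg_right hznn
      _ = wS ⬝ᵥ K *ᵥ wS := by
          rw [hdecomp, mulVec_add, dotProduct_add, add_dotProduct, add_dotProduct, hz1, hz2]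
          ring
  -- put everything together
  have hdetS : (0:ℝ) < (principalSubmatrix K S).det := (principal_posDef hK S).det_pos
  have hdetT : (0:ℝ) < (principalSubmatrix K T).det := (principal_posDef hK T).det_pos
  rw [hdS, hdT, Real.log_mul hdetT.ne' hQT.ne', Real.log_mul hdetS.ne' hQS.ne']
  have hlog : Real.log (wT ⬝ᵥ K *ᵥ wT) ≤ Real.log (wS ⬝ᵥ K *ᵥ wS) :=
    Real.log_le_log hQT key_ineq
  linarith
end

section
/- Let α be a nonempty finite type and f : Finset α → ℝ a set function satisfying: (i) f(∅) = 0; (ii) monotonicity, i.e. f(S) ≤ f(T) whenever S ⊆ T; and (iii) submodularity, i.e. f(S ∪ {i}) − f(S) ≥ f(T ∪ {i}) − f(T) for all S ⊆ T and i ∉ T. Let x_1, x_2, …, x_n be chosen greedily: for each k, x_{k+1} maximizes x ↦ f({x_1,…,x_k} ∪ {x}) over all x ∈ α. Then f({x_1,…,x_n}) ≥ (1 − 1/e) · max { f(S) : S ⊆ α, |S| = n }, where e is Euler's number. -/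
open Finset

/-- **(1 − 1/e) guarantee for greedy maximization of a monotone submodular function.**
Let `f` be a set function on a nonempty finite ground set with `f ∅ = 0`, monotone, and
submodular. If `x 0, x 1, …` are chosen greedily (each `x k` maximizes the value of `f` on
the current set extended by one element), then for every subset `S` of cardinality `n`,
`f({x 0, …, x (n−1)}) ≥ (1 − 1/e) · f S`; that is, the greedy value is at least
`(1 − 1/e)` times `max { f(S) : |S| = n }`. -/
theorem greedy_submodular_guarantee {α : Type*} [Fintype α] [Nonempty α] [DecidableEq α]
    (f : Finset α → ℝ)
    (hempty : f ∅ = 0)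
    (hmono : ∀ S T : Finset α, S ⊆ T → f S ≤ f T)
    (hsub : ∀ S T : Finset α, S ⊆ T → ∀ i ∉ T,
      f (insert i T) - f T ≤ f (insert i S) - f S)
    (n : ℕ) (x : ℕ → α)
    (hgreedy : ∀ k < n, ∀ y : α,
      f (insert y ((Finset.range k).image x)) ≤ f (insert (x k) ((Finset.range k).image x)))
    (S : Finset α) (hS : S.card = n) :
    (1 - 1 / Real.exp 1) * f S ≤ f ((Finset.range n).image x) := by
  rcases Nat.eq_zero_or_pos n with hn | hn
  · subst hn
    rw [Finset.card_eq_zero] at hS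
    subst hS
    simp [hempty]
  have hfS0 : 0 ≤ f S := by
    have := hmono ∅ S (Finset.empty_subset S)
    linarith [hempty ▸ this]
  set g : ℕ → ℝ := fun k => f ((Finset.range k).image x) with hg
  have hsum : ∀ (A G : Finset α), (∀ a ∈ A, a ∉ G) →
      f (G ∪ A) - f G ≤ ∑ e ∈ A, (f (insert e G) - f G) := by
    intro A
    induction A using Finset.induction_on with
    | empty => intro G _; simp
    | @insert a A ha ih =>
      intro G hAG
      have haG : a ∉ G ∪ A := by
        simp only [Finset.mem_union, not_or]
        exact ⟨hAG a (Finset.mem_insert_self _ _), ha⟩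
      have h1 : f (insert a (G ∪ A)) - f (G ∪ A) ≤ f (insert a G) - f G :=
        hsub G (G ∪ A) Finset.subset_union_left a haG
      have h2 : f (G ∪ A) - f G ≤ ∑ e ∈ A, (f (insert e G) - f G) :=
        ih G (fun b hb => hAG b (Finset.mem_insert_of_mem hb))
      rw [Finset.union_insert, Finset.sum_insert ha]
      linarith
  have hstep : ∀ k < n, f S - g k ≤ (n : ℝ) * (g (k + 1) - g k) := by
    intro k hk
    set G : Finset α := (Finset.range k).image x with hG
    have hg1 : g (k + 1) = f (insert (x k) G) := by
      simp [hg, hG, Finset.range_add_one, Finset.image_insert]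
    have hΔ : 0 ≤ g (k + 1) - g k := by
      have := hmono G (insert (x k) G) (Finset.subset_insert _ _)
      rw [hg1]; simp only [hg]; linarith
    have h1 : f S ≤ f (G ∪ (S \ G)) := by
      apply hmono
      intro s hs
      by_cases h : s ∈ G
      · exact Finset.mem_union_left _ h
      · exact Finset.mem_union_right _ (Finset.mem_sdiff.mpr ⟨hs, h⟩)
    have h2 := hsum (S \ G) G (fun a ha => (Finset.mem_sdiff.mp ha).2)
    have h3 : ∑ e ∈ S \ G, (f (insert e G) - f G) ≤
        ∑ _e ∈ S \ G, (g (k + 1) - g k) := by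
      apply Finset.sum_le_sum
      intro e _
      have := hgreedy k hk e
      rw [hg1]; simp only [hg]; linarith
    rw [Finset.sum_const, nsmul_eq_mul] at h3
    have hcard : ((S \ G).card : ℝ) ≤ (n : ℝ) := by
      have : (S \ G).card ≤ S.card := Finset.card_le_card (Finset.sdiff_subset)
      exact_mod_cast hS ▸ this
    have h4 : ((S \ G).card : ℝ) * (g (k + 1) - g k) ≤ (n : ℝ) * (g (k + 1) - g k) :=
      mul_le_mul_of_nonneg_right hcard hΔ
    simp only [hg] at *
    linarith
  have hnR : (0 : ℝ) < n := by exact_mod_cast hn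
  have hbase : 0 ≤ 1 - 1 / (n : ℝ) := by
    rw [sub_nonneg, div_le_one hnR]
    exact_mod_cast hn
  have key : ∀ k ≤ n, f S - g k ≤ (1 - 1 / (n : ℝ)) ^ k * f S := by
    intro k hk
    induction k with
    | zero =>
      have : g 0 = 0 := by simp [hg, hempty]
      rw [this]; simp
    | succ k ih =>
      have hk' : k < n := hk
      have ih' := ih (le_of_lt hk')
      have hs := hstep k hk'
      have h5 : f S - g (k + 1) ≤ (1 - 1 / (n : ℝ)) * (f S - g k) := by
        have : (f S - g k) / n ≤ g (k + 1) - g k := by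
          rw [div_le_iff₀ hnR] at *
          linarith [hs]
        have hfield : (1 - 1 / (n : ℝ)) * (f S - g k) = (f S - g k) - (f S - g k) / n := by
          field_simp
        rw [hfield]
        linarith
      calc f S - g (k + 1) ≤ (1 - 1 / (n : ℝ)) * (f S - g k) := h5
        _ ≤ (1 - 1 / (n : ℝ)) * ((1 - 1 / (n : ℝ)) ^ k * f S) :=
            mul_le_mul_of_nonneg_left ih' hbase
        _ = (1 - 1 / (n : ℝ)) ^ (k + 1) * f S := by ring
  have hfinal := key n le_rfl
  have hexp : (1 - 1 / (n : ℝ)) ^ n ≤ 1 / Real.exp 1 := by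
    have h1 : 1 - 1 / (n : ℝ) ≤ Real.exp (-(1 / n)) := by
      have := Real.add_one_le_exp (-(1 / (n : ℝ)))
      linarith
    have h2 : (1 - 1 / (n : ℝ)) ^ n ≤ Real.exp (-(1 / n)) ^ n :=
      pow_le_pow_left₀ hbase h1 n
    have h3 : Real.exp (-(1 / (n : ℝ))) ^ n = Real.exp (-1) := by
      rw [← Real.exp_nat_mul]
      congr 1
      field_simp
    rw [h3, Real.exp_neg] at h2
    rw [inv_eq_one_div] at h2
    exact h2
  have h6 : (1 - 1 / (n : ℝ)) ^ n * f S ≤ (1 / Real.exp 1) * f S :=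
    mul_le_mul_of_nonneg_right hexp hfS0
  simp only [hg] at hfinal
  nlinarith [hfinal, h6]
end

section
/- Let t > 0, let x_1, …, x_n be pairwise distinct points in ℝ^d, and let A be the n × n real matrix with entries A_{ij} = exp(−‖x_i − x_j‖²/t). Then A is positive definite: for every nonzero c ∈ ℝ^n, Σ_{i=1}^n Σ_{j=1}^n c_i c_j exp(−‖x_i − x_j‖²/t) > 0. -/
open Real

section Aux

variable {d n : ℕ}

/-- Expansion of a power of a "dot product" as a sum of products over multi-indices. -/
lemma gk_pow_sum_mul (k : ℕ) (u v : Fin d → ℝ) :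
    (∑ a : Fin d, u a * v a) ^ k
      = ∑ g : Fin k → Fin d, (∏ m : Fin k, u (g m)) * ∏ m : Fin k, v (g m) := by
  classical
  have h1 : (∑ a : Fin d, u a * v a) ^ k
      = ∏ _m : Fin k, ∑ a : Fin d, u a * v a := by
    simp [Finset.prod_const]
  rw [h1, Finset.prod_univ_sum]
  rw [Fintype.piFinset_univ]
  exact Finset.sum_congr rfl fun g _ => Finset.prod_mul_distrib

/-- There exists a vector `y` whose "dot products" with the distinct points `x i`
are pairwise distinct. -/
lemma gk_exists_separating (x : Fin n → EuclideanSpace ℝ (Fin d))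
    (hx : Function.Injective x) :
    ∃ y : EuclideanSpace ℝ (Fin d),
      Function.Injective (fun i => ∑ a : Fin d, x i a * y a) := by
  classical
  have hinner : ∀ (u y : EuclideanSpace ℝ (Fin d)),
      (inner ℝ u y : ℝ) = ∑ a : Fin d, u a * y a := by
    intro u y
    simp [PiLp.inner_apply, RCLike.inner_apply, mul_comm]
  by_cases hn : ∃ p : Fin n × Fin n, p.1 ≠ p.2
  · set ι := {p : Fin n × Fin n // p.1 ≠ p.2}
    have : Finite ι := Subtype.finite
    set K : ι → Subspace ℝ (EuclideanSpace ℝ (Fin d)) :=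
      fun p => LinearMap.ker ((innerSL ℝ (x p.1.1 - x p.1.2) : _ →L[ℝ] ℝ) :
        EuclideanSpace ℝ (Fin d) →ₗ[ℝ] ℝ) with hK
    have hKne : ∀ p : ι, K p ≠ ⊤ := by
      intro p hp
      have hv : x p.1.1 - x p.1.2 ≠ 0 := sub_ne_zero.mpr (fun h => p.2 (hx h))
      have hmem : (x p.1.1 - x p.1.2) ∈ K p := hp ▸ Submodule.mem_top
      simp only [hK, LinearMap.mem_ker, ContinuousLinearMap.coe_coe, innerSL_apply_apply] at hmem
      exact hv (inner_self_eq_zero.mp hmem)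
    have hcov : ¬ (⋃ p : ι, (K p : Set (EuclideanSpace ℝ (Fin d))) = Set.univ) := by
      intro h
      obtain ⟨p, hp⟩ := Subspace.exists_eq_top_of_iUnion_eq_univ h
      exact hKne p hp
    rw [Set.eq_univ_iff_forall] at hcov
    push_neg at hcov
    obtain ⟨y, hy⟩ := hcov
    simp only [Set.mem_iUnion, not_exists, SetLike.mem_coe] at hy
    refine ⟨y, fun i j hij => ?_⟩
    by_contra hne
    have hker := hy ⟨(i, j), hne⟩
    simp only [hK, LinearMap.mem_ker, ContinuousLinearMap.coe_coe, innerSL_apply_apply] at hker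
    apply hker
    have hsub : (inner ℝ (x i - x j) y : ℝ)
        = (∑ a : Fin d, x i a * y a) - ∑ a : Fin d, x j a * y a := by
      rw [inner_sub_left, hinner, hinner]
    rw [hsub]
    exact sub_eq_zero_of_eq hij
  · push_neg at hn
    exact ⟨0, fun i j _ => by have := hn (i, j); simpa using this⟩

/-- The quadratic form with kernel `⟨x i, x j⟩ ^ k` is a sum of squares. -/
lemma gk_coeff (b : Fin n → ℝ) (x : Fin n → EuclideanSpace ℝ (Fin d)) (k : ℕ) :
    ∑ i : Fin n, ∑ j : Fin n, b i * b j * (∑ a : Fin d, x i a * x j a) ^ k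
      = ∑ g : Fin k → Fin d, (∑ i : Fin n, b i * ∏ m : Fin k, x i (g m)) ^ 2 := by
  classical
  have h : ∀ i j : Fin n, b i * b j * (∑ a : Fin d, x i a * x j a) ^ k
      = ∑ g : Fin k → Fin d,
          (b i * ∏ m : Fin k, x i (g m)) * (b j * ∏ m : Fin k, x j (g m)) := by
    intro i j
    rw [gk_pow_sum_mul, Finset.mul_sum]
    exact Finset.sum_congr rfl fun g _ => by ring
  calc ∑ i : Fin n, ∑ j : Fin n, b i * b j * (∑ a : Fin d, x i a * x j a) ^ k
      = ∑ i : Fin n, ∑ g : Fin k → Fin d, ∑ j : Fin n,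
          (b i * ∏ m : Fin k, x i (g m)) * (b j * ∏ m : Fin k, x j (g m)) := by
        refine Finset.sum_congr rfl fun i _ => ?_
        simp only [h]
        exact Finset.sum_comm
    _ = ∑ g : Fin k → Fin d, ∑ i : Fin n, ∑ j : Fin n,
          (b i * ∏ m : Fin k, x i (g m)) * (b j * ∏ m : Fin k, x j (g m)) :=
        Finset.sum_comm
    _ = ∑ g : Fin k → Fin d, (∑ i : Fin n, b i * ∏ m : Fin k, x i (g m)) ^ 2 := by
        refine Finset.sum_congr rfl fun g _ => ?_
        rw [sq, Finset.sum_mul_sum]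

end Aux

/-- **Strict positive definiteness of the Gaussian kernel matrix.** Let `t > 0` and let
`x₁, …, xₙ` be pairwise distinct points in `ℝ^d`. Then the matrix with entries
`exp(−‖xᵢ − xⱼ‖²/t)` is positive definite: for every nonzero `c ∈ ℝⁿ`,
`Σᵢ Σⱼ cᵢ cⱼ exp(−‖xᵢ − xⱼ‖²/t) > 0`. -/
theorem gaussian_kernel_matrix_posDef {d n : ℕ} (t : ℝ) (ht : 0 < t)
    (x : Fin n → EuclideanSpace ℝ (Fin d)) (hx : Function.Injective x)
    (c : Fin n → ℝ) (hc : c ≠ 0) :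
    0 < ∑ i : Fin n, ∑ j : Fin n, c i * c j * Real.exp (-‖x i - x j‖ ^ 2 / t) := by
  classical
  set s : ℝ := 2 / t with hs_def
  have hs : 0 < s := by positivity
  set b : Fin n → ℝ := fun i => c i * Real.exp (-‖x i‖ ^ 2 / t) with hb_def
  have hbne : b ≠ 0 := by
    intro h
    apply hc
    funext i
    have h' := congrFun h i
    simp only [hb_def, Pi.zero_apply, mul_eq_zero] at h'
    exact h'.resolve_right (Real.exp_ne_zero _)
  have hinner : ∀ i j : Fin n, (inner ℝ (x i) (x j) : ℝ) = ∑ a : Fin d, x i a * x j a := by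
    intro i j
    simp [PiLp.inner_apply, RCLike.inner_apply, mul_comm]
  -- factor the kernel
  have hfactor : ∀ i j : Fin n,
      c i * c j * Real.exp (-‖x i - x j‖ ^ 2 / t)
        = b i * b j * Real.exp (s * ∑ a : Fin d, x i a * x j a) := by
    intro i j
    have hexp : Real.exp (-‖x i‖ ^ 2 / t) * Real.exp (-‖x j‖ ^ 2 / t)
        * Real.exp (s * ∑ a : Fin d, x i a * x j a)
        = Real.exp (-‖x i - x j‖ ^ 2 / t) := by
      rw [← Real.exp_add, ← Real.exp_add]
      congr 1
      rw [← hinner i j, norm_sub_sq_real (x i) (x j), hs_def]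
      field_simp
      ring
    rw [hb_def, ← hexp]
    ring
  simp only [hfactor]
  -- the power series coefficients
  set T : ℕ → ℝ :=
    fun k => ∑ i : Fin n, ∑ j : Fin n, b i * b j * (∑ a : Fin d, x i a * x j a) ^ k
      with hT_def
  set F : Fin n → Fin n → ℕ → ℝ :=
    fun i j k => b i * b j * ((s * ∑ a : Fin d, x i a * x j a) ^ k / k.factorial)
      with hF_def
  have hFsummable : ∀ i j : Fin n, Summable (F i j) :=
    fun i j => (Real.summable_pow_div_factorial _).mul_left _
  have hFsum : ∀ k : ℕ, s ^ k / k.factorial * T k = ∑ i : Fin n, ∑ j : Fin n, F i j k := by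
    intro k
    simp only [hT_def, hF_def]
    rw [Finset.mul_sum]
    refine Finset.sum_congr rfl fun i _ => ?_
    rw [Finset.mul_sum]
    refine Finset.sum_congr rfl fun j _ => ?_
    rw [mul_pow]
    field_simp
  have hTsummable : Summable (fun k => s ^ k / k.factorial * T k) := by
    have : Summable (fun k => ∑ i : Fin n, ∑ j : Fin n, F i j k) :=
      summable_sum fun i _ => summable_sum fun j _ => hFsummable i j
    exact this.congr fun k => (hFsum k).symm
  -- rewrite the double sum as a tsum
  have hswap : ∑ i : Fin n, ∑ j : Fin n,
      b i * b j * Real.exp (s * ∑ a : Fin d, x i a * x j a)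
      = ∑' k : ℕ, s ^ k / k.factorial * T k := by
    have h1 : ∀ i j : Fin n, b i * b j * Real.exp (s * ∑ a : Fin d, x i a * x j a)
        = ∑' k : ℕ, F i j k := by
      intro i j
      rw [Real.exp_eq_exp_ℝ, NormedSpace.exp_eq_tsum_div, hF_def, ← tsum_mul_left]
    have h2 : ∀ i : Fin n, (∑ j : Fin n, ∑' k : ℕ, F i j k)
        = ∑' k : ℕ, ∑ j : Fin n, F i j k :=
      fun i => (Summable.tsum_finsetSum fun j _ => hFsummable i j).symm
    simp only [h1]
    simp only [h2]
    rw [← Summable.tsum_finsetSum fun i _ => summable_sum fun j _ => hFsummable i j]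
    exact tsum_congr fun k => (hFsum k).symm
  rw [hswap]
  -- each coefficient is nonnegative
  have hTnonneg : ∀ k : ℕ, 0 ≤ T k := by
    intro k
    simp only [hT_def]
    rw [gk_coeff]
    exact Finset.sum_nonneg fun g _ => sq_nonneg _
  -- some coefficient is positive
  have hTpos : ∃ K : ℕ, 0 < T K := by
    by_contra h
    push_neg at h
    have hT0 : ∀ k, T k = 0 := fun k => le_antisymm (h k) (hTnonneg k)
    have hU : ∀ (k : ℕ) (g : Fin k → Fin d),
        (∑ i : Fin n, b i * ∏ m : Fin k, x i (g m)) = 0 := by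
      intro k g
      have h0 := hT0 k
      simp only [hT_def] at h0
      rw [gk_coeff] at h0
      have := (Finset.sum_eq_zero_iff_of_nonneg fun g' _ => sq_nonneg _).mp h0 g
        (Finset.mem_univ g)
      exact pow_eq_zero_iff (two_ne_zero) |>.mp this
    obtain ⟨y, hy⟩ := gk_exists_separating x hx
    set v : Fin n → ℝ := fun i => ∑ a : Fin d, x i a * y a with hv_def
    have hvinj : Function.Injective v := hy
    have hvan : ∀ k : Fin n, ((Matrix.vandermonde v).transpose).mulVec b k = 0 := by
      intro k
      have hmv : ((Matrix.vandermonde v).transpose).mulVec b k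
          = ∑ i : Fin n, v i ^ (k : ℕ) * b i := by
        simp [Matrix.mulVec, Matrix.vandermonde, dotProduct, Matrix.transpose_apply]
      rw [hmv]
      have hexpand : ∀ i : Fin n, v i ^ (k : ℕ) * b i
          = ∑ g : Fin (k : ℕ) → Fin d,
              (∏ m, y (g m)) * (b i * ∏ m, x i (g m)) := by
        intro i
        simp only [hv_def]
        rw [gk_pow_sum_mul (k : ℕ) (x i) y, Finset.sum_mul]
        exact Finset.sum_congr rfl fun g _ => by ring
      simp only [hexpand]
      rw [Finset.sum_comm]
      refine Finset.sum_eq_zero fun g _ => ?_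
      rw [← Finset.mul_sum, hU (k : ℕ) g, mul_zero]
    have hb0 : b = 0 :=
      Matrix.eq_zero_of_mulVec_eq_zero
        (by rw [Matrix.det_transpose]
            exact Matrix.det_vandermonde_ne_zero_iff.mpr hvinj)
        (funext hvan)
    exact hbne hb0
  obtain ⟨K, hK⟩ := hTpos
  refine Summable.tsum_pos hTsummable (fun k => ?_) K ?_
  · have : (0:ℝ) ≤ s ^ k / k.factorial := by positivity
    exact mul_nonneg this (hTnonneg k)
  · have : (0:ℝ) < s ^ K / K.factorial := by positivity
    exact mul_pos this hK
end
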